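/- Let 1 < p < q be coprime integers and let 𝐆 be the graph on {0,…,n−1} where i ~ j iff p | (j−i) or q | (j−i). For 0 ≤ j < p, let E_j be the set of edges (i,i+q) with i ≡ j (mod p). Then |E_j| = ⌈(n−j−q)/p⌉, and min over distinct i ≠ j of (|E_i| + |E_j|) = |E_{p−1}| + |E_{p−2}| = ⌊(n−q)/p⌋ + ⌊(n−q+1)/p⌋. -/

import Mathlib

/-- `|E_j|`: the number of `q`-edges `(i, i+q)` of the `(n,p,q)`-graph with `i ≡ j (mod p)`,
i.e. the number of `i < n - q` with `i % p = j`. -/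
def Ecard (n p q j : ℕ) : ℕ := ((Finset.range (n - q)).filter (fun i => i % p = j)).card

lemma count_mod (p j m : ℕ) (hp : 0 < p) (hj : j < p) :
    ((Finset.range m).filter (fun i => i % p = j)).card = (m - j + p - 1) / p := by
  rw [← Finset.card_range ((m - j + p - 1) / p)]
  apply Finset.card_nbij' (fun i => i / p) (fun k => p * k + j)
  · intro i hi
    simp only [Finset.mem_coe, Finset.mem_filter, Finset.mem_range] at hi ⊢
    obtain ⟨him, hmod⟩ := hi
    have hd : p * (i / p) + i % p = i := Nat.div_add_mod i p
    rw [hmod] at hd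
    rw [Nat.lt_iff_add_one_le, Nat.le_div_iff_mul_le hp]
    have he : (i / p + 1) * p = p * (i / p) + p := by ring
    rw [he]
    omega
  · intro k hk
    simp only [Finset.mem_coe, Finset.mem_filter, Finset.mem_range] at hk ⊢
    rw [Nat.lt_iff_add_one_le, Nat.le_div_iff_mul_le hp] at hk
    have he : (k + 1) * p = p * k + p := by ring
    rw [he] at hk
    constructor
    · omega
    · simp [Nat.mul_add_mod, Nat.mod_eq_of_lt hj]
  · intro i hi
    simp only [Finset.mem_coe, Finset.mem_filter, Finset.mem_range] at hi ⊢
    have hd : p * (i / p) + i % p = i := Nat.div_add_mod i p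
    omega
  · intro k _
    simp [Nat.mul_add_div hp, Nat.div_eq_of_lt hj]

theorem Ecard_formula (p q n : ℕ) (hp : 1 < p) (hpq : p < q) (hcop : Nat.Coprime p q) :
    (∀ j < p, Ecard n p q j = (n - j - q + p - 1) / p) ∧
    sInf {v : ℕ | ∃ i < p, ∃ j < p, i ≠ j ∧ v = Ecard n p q i + Ecard n p q j} =
      Ecard n p q (p - 1) + Ecard n p q (p - 2) ∧
    Ecard n p q (p - 1) + Ecard n p q (p - 2) = (n - q) / p + (n - q + 1) / p := by
  have hp0 : 0 < p := by omega
  have hform : ∀ j < p, Ecard n p q j = (n - j - q + p - 1) / p := by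
    intro j hj
    rw [Ecard, count_mod p j (n - q) hp0 hj]
    congr 1
    omega
  have hmono : ∀ a b, a ≤ b → b < p → Ecard n p q b ≤ Ecard n p q a := by
    intro a b hab hb
    rw [hform a (by omega), hform b hb]
    apply Nat.div_le_div_right
    omega
  refine ⟨hform, ?_, ?_⟩
  · have hmem : Ecard n p q (p - 1) + Ecard n p q (p - 2) ∈
        {v : ℕ | ∃ i < p, ∃ j < p, i ≠ j ∧ v = Ecard n p q i + Ecard n p q j} :=
      ⟨p - 1, by omega, p - 2, by omega, by omega, rfl⟩
    refine le_antisymm (Nat.sInf_le hmem) (le_csInf ⟨_, hmem⟩ ?_)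
    rintro b ⟨i, hi, j, hj, hij, rfl⟩
    rcases Nat.lt_or_ge i j with h | h
    · have h1 : Ecard n p q (p - 1) ≤ Ecard n p q j := hmono j (p - 1) (by omega) (by omega)
      have h2 : Ecard n p q (p - 2) ≤ Ecard n p q i := hmono i (p - 2) (by omega) (by omega)
      omega
    · have h' : j < i := by omega
      have h1 : Ecard n p q (p - 1) ≤ Ecard n p q i := hmono i (p - 1) (by omega) (by omega)
      have h2 : Ecard n p q (p - 2) ≤ Ecard n p q j := hmono j (p - 2) (by omega) (by omega)
      omega
  · rw [hform (p - 1) (by omega), hform (p - 2) (by omega)]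
    have e1 : (n - (p - 1) - q + p - 1) / p = (n - q) / p := by
      rcases le_or_gt (p - 1) (n - q) with h | h
      · congr 1; omega
      · rw [Nat.div_eq_of_lt (by omega), Nat.div_eq_of_lt (by omega)]
    have e2 : (n - (p - 2) - q + p - 1) / p = (n - q + 1) / p := by
      rcases le_or_gt (p - 2) (n - q) with h | h
      · congr 1; omega
      · rw [Nat.div_eq_of_lt (by omega), Nat.div_eq_of_lt (by omega)]
    omega
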